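/- Let R be a ring and I a nilpotent two-sided ideal of R. If the quotient ring R/I is almost Armendariz, then R is almost Armendariz. -/

import Mathlib

/-- An element `a` of a ring `R` is *strongly nilpotent* if every sequence
`a₀ = a`, `aₙ₊₁ ∈ aₙ R aₙ` is eventually zero. -/
def IsStronglyNilpotent {R : Type*} [Ring R] (a : R) : Prop :=
  ∀ s : ℕ → R, s 0 = a → (∀ n : ℕ, ∃ r : R, s (n + 1) = s n * r * s n) → ∃ n : ℕ, s n = 0

/-- The prime radical `P(R)` of a ring `R`: the intersection of all prime two-sided
ideals of `R`, equivalently the set of strongly nilpotent elements of `R`. -/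
def primeRadical (R : Type*) [Ring R] : Set R :=
  {a : R | IsStronglyNilpotent a}

/-- A ring `R` is *almost Armendariz* if whenever `f, g ∈ R[x]` satisfy `f g = 0`, every
product of a coefficient of `f` with a coefficient of `g` lies in the prime radical `P(R)`. -/
def IsAlmostArmendariz (R : Type*) [Ring R] : Prop :=
  ∀ f g : Polynomial R, f * g = 0 → ∀ i j : ℕ, f.coeff i * g.coeff j ∈ primeRadical R

/-- If the image of `a` in `R/I` is strongly nilpotent and `I` is nilpotent, then `a`
is strongly nilpotent in `R`. -/
lemma isStronglyNilpotent_of_quotient {R : Type*} [Ring R] (I : TwoSidedIdeal R)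
    (hnil : ∃ k : ℕ, 0 < k ∧ ∀ l : List R, l.length = k → (∀ x ∈ l, x ∈ I) → l.prod = 0)
    (a : R) (ha : IsStronglyNilpotent (I.ringCon.mk' a)) : IsStronglyNilpotent a := by
  obtain ⟨k, hk, hknil⟩ := hnil
  intro s hs0 hstep
  -- the pushed-forward sequence
  obtain ⟨N, hN⟩ := ha (fun n => I.ringCon.mk' (s n)) (by rw [hs0])
    (fun n => by obtain ⟨r, hr⟩ := hstep n
                 exact ⟨I.ringCon.mk' r, by rw [hr]; simp⟩)
  have hNI : s N ∈ I := by
    rw [← TwoSidedIdeal.ker_ringCon_mk' I, TwoSidedIdeal.mem_ker]; exact hN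
  -- s (N + m) is a product of 2^m elements of I
  have key : ∀ m : ℕ, ∃ l : List R, l.length = 2 ^ m ∧ (∀ x ∈ l, x ∈ I) ∧ s (N + m) = l.prod := by
    intro m
    induction m with
    | zero => exact ⟨[s N], rfl, by simpa using hNI, by simp⟩
    | succ m ih =>
      obtain ⟨l, hlen, hmem, hprod⟩ := ih
      obtain ⟨r, hr⟩ := hstep (N + m)
      obtain hl | ⟨l₁, c, hl⟩ := l.eq_nil_or_concat'
      · rw [hl] at hlen; simp at hlen
        exact absurd hlen (pow_ne_zero m two_ne_zero).symm
      refine ⟨l₁ ++ [c * r] ++ l, ?_, ?_, ?_⟩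
      · have : l₁.length + 1 = 2 ^ m := by
          have := hlen; rw [hl] at this; simpa using this
        simp [hlen]; omega
      · intro x hx
        simp only [List.mem_append, List.mem_singleton] at hx
        rcases hx with (hx | hx) | hx
        · exact hmem x (by rw [hl]; exact List.mem_append_left _ hx)
        · rw [hx]; exact I.mul_mem_right _ _ (hmem c (by rw [hl]; simp))
        · exact hmem x hx
      · have : s (N + (m + 1)) = s (N + m) * r * s (N + m) := by
          rw [← hr]; ring_nf
        rw [this, hprod, hl]
        simp [List.prod_append, mul_assoc]
  -- take m with 2^m ≥ k
  refine ⟨N + k, ?_⟩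
  obtain ⟨l, hlen, hmem, hprod⟩ := key k
  have hkle : k ≤ 2 ^ k := Nat.lt_two_pow_self.le
  have : l.prod = (l.take k).prod * (l.drop k).prod := by
    rw [← List.prod_append, List.take_append_drop]
  rw [hprod, this, hknil (l.take k) (by rw [List.length_take]; omega)
    (fun x hx => hmem x (List.mem_of_mem_take hx)), zero_mul]

/-- Let `I` be a nilpotent two-sided ideal of `R` (there is `k ≥ 1` with `Iᵏ = 0`, i.e. every
product of `k` elements of `I` vanishes).  If the quotient ring `R/I` is almost Armendariz,
then `R` is almost Armendariz. -/
theorem almostArmendariz_of_quotient_of_nilpotent_ideal {R : Type*} [Ring R]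
    (I : TwoSidedIdeal R)
    (hnil : ∃ k : ℕ, 0 < k ∧ ∀ l : List R, l.length = k → (∀ x ∈ l, x ∈ I) → l.prod = 0)
    (h : IsAlmostArmendariz I.ringCon.Quotient) : IsAlmostArmendariz R := by
  intro f g hfg i j
  have := h (f.map I.ringCon.mk') (g.map I.ringCon.mk')
    (by rw [← Polynomial.map_mul, hfg, Polynomial.map_zero]) i j
  simp only [Polynomial.coeff_map] at this
  rw [← map_mul] at this
  exact isStronglyNilpotent_of_quotient I hnil _ this
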